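/- With the hypotheses of the resonant submultialgebra theorem, suppose additionally each S_p has a partition S_p = Ŝ_p ∪ Š_p with Ŝ_p ∩ Š_p = ∅ and Ŝ_{p_1}·Š_{p_2}⋯Š_{p_n} ⊆ ∩_{r∈i_{(p_1,...,p_n)}} Ŝ_r. Define Ĝ_R = ⊕_p Ŝ_p⊗V_p and Ǧ_R = ⊕_p Š_p⊗V_p. Then [Ĝ_R, Ǧ_R, ..., Ǧ_R]_S ⊆ Ĝ_R (one argument from Ĝ_R, the other n−1 from Ǧ_R). -/
import Mathlib


/-- Generalized Jacobi identity for an alternating (m+1)-bracket. -/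
def GJI {K G : Type*} [CommRing K] [AddCommGroup G] [Module K G] {m : ℕ}
    (B : AlternatingMap K G G (Fin (m + 1))) : Prop :=
  ∀ x : Fin (2 * m + 1) → G,
    ∑ σ : Equiv.Perm (Fin (2 * m + 1)), (Equiv.Perm.sign σ : ℤ) •
      B (Fin.cons (B fun j => x (σ (Fin.castLE (by omega) j)))
        (fun j : Fin m => x (σ ⟨m + 1 + j.1, by have := j.isLt; omega⟩))) = 0

/-- n-fold product in a (possibly non-unital) multiplicative structure. -/
def sprod {S : Type*} [Mul S] {m : ℕ} (l : Fin (m + 1) → S) : S :=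
  (List.ofFn fun j : Fin m => l j.succ).foldl (· * ·) (l 0)

/-- The generator `λ ⊗ x` of the S-expanded module `S ⊗ G` (modelled as the free
module `S →₀ G` on the semigroup S with coefficients in G). -/
lemma multilinear_span_mem {K M N : Type*} [Field K] [AddCommGroup M] [Module K M]
    [AddCommGroup N] [Module K N] {n : ℕ}
    (f : MultilinearMap K (fun _ : Fin n => M) N) (s : Fin n → Set M) (T : Submodule K N)
    (h : ∀ x : Fin n → M, (∀ i, x i ∈ s i) → f x ∈ T) :
    ∀ x : Fin n → M, (∀ i, x i ∈ Submodule.span K (s i)) → f x ∈ T := by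
  have key : ∀ t : Finset (Fin n), ∀ x : Fin n → M,
      (∀ i ∈ t, x i ∈ Submodule.span K (s i)) → (∀ i ∉ t, x i ∈ s i) → f x ∈ T := by
    intro t
    induction t using Finset.induction_on with
    | empty => intro x _ h2; exact h x fun i => h2 i (Finset.notMem_empty i)
    | @insert a t ha ih =>
      intro x h1 h2
      have hgen : ∀ y ∈ Submodule.span K (s a), f (Function.update x a y) ∈ T := by
        intro y hy
        induction hy using Submodule.span_induction with
        | mem z hz =>
          apply ih
          · intro i hi
            rw [Function.update_of_ne (by rintro rfl; exact ha hi)]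
            exact h1 i (Finset.mem_insert_of_mem hi)
          · intro i hi
            by_cases hia : i = a
            · subst hia; simpa using hz
            · rw [Function.update_of_ne hia]
              exact h2 i (by simp [hia, hi])
        | zero => simp
        | add u v _ _ hu hv => rw [f.map_update_add]; exact T.add_mem hu hv
        | smul c u _ hu => rw [f.map_update_smul]; exact T.smul_mem c hu
      have := hgen (x a) (h1 a (Finset.mem_insert_self a t))
      rwa [Function.update_eq_self] at this
  intro x hx
  exact key Finset.univ x (fun i _ => hx i) (fun i hi => absurd (Finset.mem_univ i) hi)

noncomputable def gen {S G : Type*} [AddCommGroup G] (lam : S) (x : G) : S →₀ G :=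
  Finsupp.single lam x
/-- given a resonant decomposition and partitions `S_p = Ŝ_p ∪ Š_p`
with `Ŝ_{p_1}·Š_{p_2}⋯Š_{p_n} ⊆ ∩_{r∈i_(p)} Ŝ_r`, the S-expanded bracket
satisfies `[Ĝ_R, Ǧ_R, ..., Ǧ_R]_S ⊆ Ĝ_R`. -/
theorem reduced_of_resonant {K G S I : Type*} [Field K] [AddCommGroup G] [Module K G]
    [CommSemigroup S] (m : ℕ) (hn : Even (m + 1))
    (B : AlternatingMap K G G (Fin (m + 1))) (hB : GJI B)
    (V : I → Submodule K G) (ind : (Fin (m + 1) → I) → Set I)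
    (hstruct : ∀ (p : Fin (m + 1) → I) (x : Fin (m + 1) → G),
      (∀ k, x k ∈ V (p k)) → B x ∈ ⨆ r ∈ ind p, V r)
    (Sp Shat Scheck : I → Set S)
    (hres : ∀ (p : Fin (m + 1) → I) (lam : Fin (m + 1) → S),
      (∀ k, lam k ∈ Sp (p k)) → sprod lam ∈ ⋂ r ∈ ind p, Sp r)
    (hpart : ∀ p, Sp p = Shat p ∪ Scheck p)
    (hdisj : ∀ p, Shat p ∩ Scheck p = ∅)
    (hresp : ∀ (p : Fin (m + 1) → I) (lam : Fin (m + 1) → S),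
      lam 0 ∈ Shat (p 0) → (∀ k, k ≠ 0 → lam k ∈ Scheck (p k)) →
      sprod lam ∈ ⋂ r ∈ ind p, Shat r)
    (Bexp : AlternatingMap K (S →₀ G) (S →₀ G) (Fin (m + 1)))
    (hBexp : ∀ (lam : Fin (m + 1) → S) (x : Fin (m + 1) → G),
      Bexp (fun k => gen (lam k) (x k)) = gen (sprod lam) (B x)) :
    ∀ x : Fin (m + 1) → (S →₀ G),
      (x 0 ∈ ⨆ q, Submodule.span K
        {e | ∃ lam ∈ Shat q, ∃ v ∈ V q, e = gen lam v}) →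
      (∀ k, k ≠ 0 → x k ∈ ⨆ q, Submodule.span K
        {e | ∃ lam ∈ Scheck q, ∃ v ∈ V q, e = gen lam v}) →
      Bexp x ∈ ⨆ q, Submodule.span K
        {e | ∃ lam ∈ Shat q, ∃ v ∈ V q, e = gen lam v} := by
  intro x hx0 hxk
  set Ahat : I → Set (S →₀ G) :=
    fun q => {e | ∃ lam ∈ Shat q, ∃ v ∈ V q, e = gen lam v} with hAhat
  set Acheck : I → Set (S →₀ G) :=
    fun q => {e | ∃ lam ∈ Scheck q, ∃ v ∈ V q, e = gen lam v} with hAcheck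
  set T : Submodule K (S →₀ G) := ⨆ q, Submodule.span K (Ahat q) with hT
  have hgen : ∀ y : Fin (m + 1) → (S →₀ G),
      (∀ i, y i ∈ (if i = 0 then ⋃ q, Ahat q else ⋃ q, Acheck q)) → Bexp y ∈ T := by
    intro y hy
    have hex : ∀ i, ∃ q, ∃ lam, ∃ v, lam ∈ (if i = 0 then Shat q else Scheck q) ∧
        v ∈ V q ∧ y i = gen lam v := by
      intro i
      by_cases hi : i = 0
      · have := hy i; rw [if_pos hi] at this
        obtain ⟨A, ⟨q, rfl⟩, lam, hlam, v, hv, he⟩ := this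
        exact ⟨q, lam, v, by rw [if_pos hi]; exact hlam, hv, he⟩
      · have := hy i; rw [if_neg hi] at this
        obtain ⟨A, ⟨q, rfl⟩, lam, hlam, v, hv, he⟩ := this
        exact ⟨q, lam, v, by rw [if_neg hi]; exact hlam, hv, he⟩
    choose p lam v hlam hv hyv using hex
    have hy' : y = fun k => gen (lam k) (v k) := funext fun k => hyv k
    rw [hy', hBexp]
    have hsp : sprod lam ∈ ⋂ r ∈ ind p, Shat r := by
      apply hresp
      · have := hlam 0; rwa [if_pos rfl] at this
      · intro k hk; have := hlam k; rwa [if_neg hk] at this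
    have hBv : B v ∈ ⨆ r ∈ ind p, V r := hstruct p v hv
    have hmap : gen (sprod lam) (B v) ∈
        Submodule.map (Finsupp.lsingle (R := K) (sprod lam)) (⨆ r ∈ ind p, V r) :=
      Submodule.mem_map_of_mem hBv
    refine SetLike.le_def.mp ?_ hmap
    rw [Submodule.map_iSup]
    refine iSup_le fun r => ?_
    rw [Submodule.map_iSup]
    refine iSup_le fun hr => ?_
    refine le_trans ?_ (le_iSup (fun q => Submodule.span K (Ahat q)) r)
    rintro e ⟨w, hw, rfl⟩
    refine Submodule.subset_span ⟨sprod lam, ?_, w, hw, rfl⟩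
    exact Set.mem_iInter.mp (Set.mem_iInter.mp hsp r) hr
  refine multilinear_span_mem Bexp.toMultilinearMap
    (fun i => if i = 0 then ⋃ q, Ahat q else ⋃ q, Acheck q) T hgen x ?_
  intro i
  by_cases hi : i = 0
  · beta_reduce
    rw [if_pos hi, Submodule.span_iUnion, hi]; exact hx0
  · beta_reduce
    rw [if_neg hi, Submodule.span_iUnion]; exact hxk i hi
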